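/- Let μ be a positive finite measure on the unit circle with μ([θ-s,θ+s]) ≤ h(s) for all s ∈ (0,π], where h(s) ≤ s·g(s) for a positive continuous decreasing g with μ(T) ≤ π g(π). Then for 0 ≤ r < 1, θ, and ε ∈ (0,π]: ∫_{|t-θ|>ε} P_r(t-θ) dμ(t) ≤ π g(ε). -/

import Mathlib

open MeasureTheory Set Real

instance : Fact (0 < 2 * π) := ⟨by positivity⟩

noncomputable def P (r t : ℝ) : ℝ := (1 - r ^ 2) / (1 + r ^ 2 - 2 * r * Real.cos t)

open scoped ENNReal

noncomputable def N (r s : ℝ) : ℝ :=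
  (1 - r ^ 2) * (2 * r * Real.sin s) / (1 + r ^ 2 - 2 * r * Real.cos s) ^ 2

noncomputable def Q (r s : ℝ) : ℝ := s + 2 * Real.arctan (r * Real.sin s / (1 - r * Real.cos s))

variable {r s : ℝ}

lemma D_pos (hr0 : 0 ≤ r) (hr1 : r < 1) (s : ℝ) : 0 < 1 + r ^ 2 - 2 * r * Real.cos s := by
  nlinarith [Real.cos_le_one s, Real.neg_one_le_cos s, sq_nonneg (1 - r), sq_nonneg (1 + r)]

lemma D1_pos (hr0 : 0 ≤ r) (hr1 : r < 1) (s : ℝ) : 0 < 1 - r * Real.cos s := by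
  nlinarith [Real.cos_le_one s, Real.neg_one_le_cos s]

lemma P_nonneg (hr0 : 0 ≤ r) (hr1 : r < 1) (s : ℝ) : 0 ≤ P r s :=
  div_nonneg (by nlinarith) (D_pos hr0 hr1 s).le

lemma N_nonneg (hr0 : 0 ≤ r) (hr1 : r < 1) (hs0 : 0 ≤ s) (hsπ : s ≤ π) : 0 ≤ N r s :=
  div_nonneg (mul_nonneg (by nlinarith) (mul_nonneg (by positivity)
    (Real.sin_nonneg_of_nonneg_of_le_pi hs0 hsπ))) (by positivity)

lemma P_cont (hr0 : 0 ≤ r) (hr1 : r < 1) : Continuous (P r) := by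
  apply Continuous.div (by continuity) (by continuity)
  intro s; exact (D_pos hr0 hr1 s).ne'

lemma N_cont (hr0 : 0 ≤ r) (hr1 : r < 1) : Continuous (N r) := by
  apply Continuous.div (by continuity) (by continuity)
  intro s; exact pow_ne_zero _ (D_pos hr0 hr1 s).ne'

lemma P_antitone (hr0 : 0 ≤ r) (hr1 : r < 1) : AntitoneOn (P r) (Set.Icc 0 π) := by
  intro a ha b hb hab
  have hc : Real.cos b ≤ Real.cos a :=
    Real.cos_le_cos_of_nonneg_of_le_pi ha.1 hb.2 hab
  have hnum : 0 ≤ 1 - r ^ 2 := by nlinarith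
  unfold P
  gcongr
  · exact D_pos hr0 hr1 a


lemma hasDerivAt_P (hr0 : 0 ≤ r) (hr1 : r < 1) (s : ℝ) :
    HasDerivAt (P r) (-(N r s)) s := by
  have hD := D_pos hr0 hr1 s
  have hd : HasDerivAt (fun s => 1 + r ^ 2 - 2 * r * Real.cos s) (2 * r * Real.sin s) s := by
    have := ((Real.hasDerivAt_cos s).const_mul (2 * r)).const_sub (1 + r ^ 2)
    simpa using this
  have := (hasDerivAt_const s (1 - r ^ 2)).div hd hD.ne'
  refine this.congr_deriv ?_
  symm
  unfold N
  field_simp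
  ring

lemma hasDerivAt_Q (hr0 : 0 ≤ r) (hr1 : r < 1) (s : ℝ) :
    HasDerivAt (Q r) (P r s) s := by
  have hD := D_pos hr0 hr1 s
  have hD1 := D1_pos hr0 hr1 s
  have hnum : HasDerivAt (fun s => r * Real.sin s) (r * Real.cos s) s := by
    simpa using (Real.hasDerivAt_sin s).const_mul r
  have hden : HasDerivAt (fun s => 1 - r * Real.cos s) (r * Real.sin s) s := by
    have := ((Real.hasDerivAt_cos s).const_mul r).const_sub 1
    simpa [mul_comm] using this
  have hu := hnum.div hden hD1.ne'
  have harc := hu.arctan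
  have hQ := (hasDerivAt_id s).add (harc.const_mul 2)
  refine hQ.congr_deriv ?_
  symm
  have hs := Real.sin_sq_add_cos_sq s
  have h1u : (0:ℝ) < 1 + (r * Real.sin s / (1 - r * Real.cos s)) ^ 2 := by positivity
  unfold P
  simp only [Pi.div_apply]
  have e : 1 + (r * Real.sin s / (1 - r * Real.cos s)) ^ 2 = (1 + r ^ 2 - 2 * r * Real.cos s) / (1 - r * Real.cos s) ^ 2 := by
    field_simp
    linear_combination r^2 * hs
  have hDne := hD.ne'
  have hD1ne := hD1.ne'
  rw [e, one_div_div, div_mul_div_comm, mul_comm ((1 - r * Real.cos s) ^ 2), mul_div_mul_right _ _ (pow_ne_zero 2 hD1ne), eq_comm, ← sub_eq_zero]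
  field_simp
  linear_combination (-2*r^2) * hs

lemma Q_zero : Q r 0 = 0 := by simp [Q]

lemma Q_pi (hr0 : 0 ≤ r) (hr1 : r < 1) : Q r π = π := by simp [Q]

lemma integral_N (hr0 : 0 ≤ r) (hr1 : r < 1) (a b : ℝ) :
    ∫ s in a..b, N r s = P r a - P r b := by
  have : ∀ s ∈ Set.uIcc a b, HasDerivAt (fun u => -P r u) (N r s) s := fun s _ => by
    exact (hasDerivAt_P hr0 hr1 s).neg.congr_deriv (neg_neg _)
  have h := intervalIntegral.integral_eq_sub_of_hasDerivAt this
    ((N_cont hr0 hr1).intervalIntegrable a b)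
  rw [h]; ring

lemma integral_P (hr0 : 0 ≤ r) (hr1 : r < 1) (a b : ℝ) :
    ∫ s in a..b, P r s = Q r b - Q r a :=
  intervalIntegral.integral_eq_sub_of_hasDerivAt
    (fun s _ => hasDerivAt_Q hr0 hr1 s) ((P_cont hr0 hr1).intervalIntegrable a b)

lemma integral_sN (hr0 : 0 ≤ r) (hr1 : r < 1) (a b : ℝ) :
    ∫ s in a..b, s * N r s = (Q r b - b * P r b) - (Q r a - a * P r a) := by
  have : ∀ s ∈ Set.uIcc a b, HasDerivAt (fun u => Q r u - u * P r u) (s * N r s) s := by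
    intro s _
    have h1 := (hasDerivAt_Q hr0 hr1 s).sub ((hasDerivAt_id s).mul (hasDerivAt_P hr0 hr1 s))
    refine h1.congr_deriv ?_
    simp [mul_comm]
  exact intervalIntegral.integral_eq_sub_of_hasDerivAt this
    (((continuous_id.mul (N_cont hr0 hr1))).intervalIntegrable a b)

lemma eps_P_le_Q (hr0 : 0 ≤ r) (hr1 : r < 1) {ε : ℝ} (hε : 0 < ε) (hεπ : ε ≤ π) :
    ε * P r ε ≤ Q r ε := by
  have hmono : ∀ s ∈ Set.Icc (0:ℝ) ε, P r ε ≤ P r s := fun s hs =>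
    P_antitone hr0 hr1 ⟨hs.1, hs.2.trans hεπ⟩ ⟨hε.le, hεπ⟩ hs.2
  have h := intervalIntegral.integral_mono_on hε.le (intervalIntegrable_const (μ := MeasureTheory.volume) (c := P r ε))
    ((P_cont hr0 hr1).intervalIntegrable 0 ε) hmono
  rw [intervalIntegral.integral_const, integral_P hr0 hr1, Q_zero] at h
  simpa [mul_comm] using h


/-- The far part of the Poisson integral: `∫_{|t-θ| > ε} P_r(t-θ) dμ ≤ π g(ε)`. -/
theorem stmt13 (μ : Measure (AddCircle (2 * π))) [IsFiniteMeasure μ]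
    (h g : ℝ → ℝ)
    (hgpos : ∀ t ∈ Set.Ioc (0 : ℝ) π, 0 < g t)
    (hgcont : ContinuousOn g (Set.Ioc (0 : ℝ) π))
    (hganti : AntitoneOn g (Set.Ioc (0 : ℝ) π))
    (hhg : ∀ s ∈ Set.Ioc (0 : ℝ) π, h s ≤ s * g s)
    (hball : ∀ (θ : AddCircle (2 * π)), ∀ s ∈ Set.Ioc (0 : ℝ) π,
      μ (Metric.closedBall θ s) ≤ ENNReal.ofReal (h s))
    (htot : μ Set.univ ≤ ENNReal.ofReal (π * g π)) :
    ∀ r ∈ Set.Ico (0 : ℝ) 1, ∀ θ : AddCircle (2 * π), ∀ ε ∈ Set.Ioc (0 : ℝ) π,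
      ∫ t in {t : AddCircle (2 * π) | ε < ‖t - θ‖}, P r ‖t - θ‖ ∂μ ≤ π * g ε := by
  intro r hr θ ε hε
  obtain ⟨hr0, hr1⟩ := hr
  obtain ⟨hε0, hεπ⟩ := hε
  have hπ : (0:ℝ) < π := Real.pi_pos
  have hgε : 0 < g ε := hgpos ε ⟨hε0, hεπ⟩
  set S : Set (AddCircle (2*π)) := {t | ε < ‖t - θ‖} with hSdef
  have hx_cont : Continuous fun t : AddCircle (2*π) => ‖t - θ‖ :=
    (continuous_id.sub continuous_const).norm
  have hX : ∀ t : AddCircle (2*π), ‖t - θ‖ ≤ π := by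
    intro t
    have h2π : (2*π) ≠ 0 := by positivity
    have := AddCircle.norm_le_half_period (p := 2*π) (x := t - θ) h2π
    rwa [abs_of_pos (by positivity), show 2*π/2 = π by ring] at this
  have hS : MeasurableSet S := measurableSet_lt measurable_const hx_cont.measurable
  -- the kernel of the Fubini argument
  set F : ℝ → ℝ≥0∞ := fun s => ENNReal.ofReal (N r s) with hFdef
  set U : Set (AddCircle (2*π) × ℝ) := {p | ‖p.1 - θ‖ ≤ p.2} with hUdef
  have hU : MeasurableSet U :=
    measurableSet_le (hx_cont.measurable.comp measurable_fst) measurable_snd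
  set φ : AddCircle (2*π) → ℝ → ℝ≥0∞ :=
    fun t s => U.indicator (fun p => F p.2) (t, s) with hφdef
  have hφmeas : Measurable (Function.uncurry φ) := by
    have : Function.uncurry φ = U.indicator (fun p => F p.2) := rfl
    rw [this]
    exact (ENNReal.measurable_ofReal.comp ((N_cont hr0 hr1).measurable.comp
      measurable_snd)).indicator hU
  -- pointwise identity on S
  have key : ∀ t ∈ S, ENNReal.ofReal (P r ‖t - θ‖)
      = ENNReal.ofReal (P r π) + ∫⁻ s in Set.Ioc ε π, φ t s := by
    intro t ht
    set x := ‖t - θ‖ with hxdef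
    have hx1 : ε < x := ht
    have hx2 : x ≤ π := hX t
    have hx0 : 0 < x := hε0.trans hx1
    have hφeq : ∀ s, φ t s = (Set.Ici x).indicator F s := by
      intro s
      by_cases hc : x ≤ s <;> simp [hφdef, hUdef, Set.indicator, hc, hxdef]
    have h1 : ∫⁻ s in Set.Ioc ε π, φ t s = ∫⁻ s in Set.Ioc x π, F s := by
      simp_rw [hφeq]
      rw [lintegral_indicator measurableSet_Ici, Measure.restrict_restrict measurableSet_Ici]
      have hIcc : Set.Ici x ∩ Set.Ioc ε π = Set.Icc x π := by
        ext u
        simp only [Set.mem_inter_iff, Set.mem_Ici, Set.mem_Ioc, Set.mem_Icc]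
        constructor
        · rintro ⟨h1, _, h3⟩; exact ⟨h1, h3⟩
        · rintro ⟨h1, h2⟩; exact ⟨h1, hx1.trans_le h1, h2⟩
      rw [hIcc]
      exact setLIntegral_congr (Ioc_ae_eq_Icc).symm
    have h2 : ∫⁻ s in Set.Ioc x π, F s = ENNReal.ofReal (P r x - P r π) := by
      simp only [hFdef]
      rw [← ofReal_integral_eq_lintegral_ofReal ((N_cont hr0 hr1).integrableOn_Ioc)
        ((ae_restrict_iff' measurableSet_Ioc).2
          (Filter.Eventually.of_forall fun s hs => N_nonneg hr0 hr1 (hx0.le.trans hs.1.le) hs.2))]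
      rw [← intervalIntegral.integral_of_le hx2, integral_N hr0 hr1]
    rw [h1, h2, ← ENNReal.ofReal_add (P_nonneg hr0 hr1 π)
      (sub_nonneg.2 (P_antitone hr0 hr1 ⟨hx0.le, hx2⟩ ⟨hπ.le, le_refl π⟩ hx2))]
    congr 1
    ring
  -- inner integral bound
  have inner : ∀ s ∈ Set.Ioc ε π, (∫⁻ t in S, φ t s ∂μ)
      ≤ ENNReal.ofReal (N r s * (s * g ε)) := by
    intro s hs
    have hs' : s ∈ Set.Ioc (0:ℝ) π := ⟨hε0.trans hs.1, hs.2⟩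
    have hφ2 : ∀ t, φ t s = Set.indicator {t : AddCircle (2*π) | ‖t - θ‖ ≤ s}
        (fun _ => F s) t := by
      intro t
      by_cases hc : ‖t - θ‖ ≤ s <;> simp [hφdef, hUdef, Set.indicator, hc]
    have hmeasB : MeasurableSet {t : AddCircle (2*π) | ‖t - θ‖ ≤ s} :=
      measurableSet_le hx_cont.measurable measurable_const
    have hballeq : {t : AddCircle (2*π) | ‖t - θ‖ ≤ s} = Metric.closedBall θ s := by
      ext t; simp [Metric.mem_closedBall, dist_eq_norm]
    have hμb : (μ.restrict S) {t : AddCircle (2*π) | ‖t - θ‖ ≤ s}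
        ≤ ENNReal.ofReal (s * g ε) := by
      calc (μ.restrict S) {t : AddCircle (2*π) | ‖t - θ‖ ≤ s}
          ≤ μ {t : AddCircle (2*π) | ‖t - θ‖ ≤ s} := Measure.restrict_apply_le _ _
        _ ≤ ENNReal.ofReal (h s) := by rw [hballeq]; exact hball θ s hs'
        _ ≤ ENNReal.ofReal (s * g ε) := by
            apply ENNReal.ofReal_le_ofReal
            refine (hhg s hs').trans ?_
            have : g s ≤ g ε := hganti ⟨hε0, hεπ⟩ hs' hs.1.le
            nlinarith [hs'.1]
    calc (∫⁻ t in S, φ t s ∂μ)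
        = F s * (μ.restrict S) {t : AddCircle (2*π) | ‖t - θ‖ ≤ s} := by
          simp_rw [hφ2]
          exact lintegral_indicator_const hmeasB (F s)
      _ ≤ F s * ENNReal.ofReal (s * g ε) := mul_le_mul_right hμb _
      _ = ENNReal.ofReal (N r s * (s * g ε)) :=
          (ENNReal.ofReal_mul (N_nonneg hr0 hr1 hs'.1.le hs'.2)).symm
  -- Fubini
  have hswap : (∫⁻ t in S, (∫⁻ s in Set.Ioc ε π, φ t s) ∂μ)
      = ∫⁻ s in Set.Ioc ε π, (∫⁻ t in S, φ t s ∂μ) := by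
    exact lintegral_lintegral_swap hφmeas.aemeasurable
  -- value of the s-integral bound
  set A : ℝ := (Q r π - π * P r π) - (Q r ε - ε * P r ε) with hAdef
  have hA0 : 0 ≤ A := by
    rw [hAdef, ← integral_sN hr0 hr1]
    apply intervalIntegral.integral_nonneg hεπ
    intro s hs
    exact mul_nonneg (hε0.le.trans hs.1) (N_nonneg hr0 hr1 (hε0.le.trans hs.1) hs.2)
  have houter : (∫⁻ s in Set.Ioc ε π, (∫⁻ t in S, φ t s ∂μ))
      ≤ ENNReal.ofReal (g ε * A) := by
    calc (∫⁻ s in Set.Ioc ε π, (∫⁻ t in S, φ t s ∂μ))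
        ≤ ∫⁻ s in Set.Ioc ε π, ENNReal.ofReal (N r s * (s * g ε)) :=
          setLIntegral_mono' measurableSet_Ioc inner
      _ = ENNReal.ofReal (∫ s in Set.Ioc ε π, N r s * (s * g ε)) := by
          rw [← ofReal_integral_eq_lintegral_ofReal (f := fun s : ℝ => N r s * (s * g ε))
            ((((N_cont hr0 hr1).mul (continuous_id.mul continuous_const)) :
              Continuous fun s : ℝ => N r s * (s * g ε)).integrableOn_Ioc)
            ((ae_restrict_iff' measurableSet_Ioc).2 (Filter.Eventually.of_forall fun s hs =>
              mul_nonneg (N_nonneg hr0 hr1 (hε0.le.trans hs.1.le) hs.2)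
                (mul_nonneg (hε0.le.trans hs.1.le) hgε.le)))]
      _ = ENNReal.ofReal (g ε * A) := by
          rw [← intervalIntegral.integral_of_le hεπ]
          rw [show (fun s => N r s * (s * g ε)) = fun s => g ε * (s * N r s) from
            funext fun s => by ring]
          rw [intervalIntegral.integral_const_mul, integral_sN hr0 hr1]
  -- total μ S bound
  have hμS : μ S ≤ ENNReal.ofReal (π * g ε) := by
    refine (measure_mono (Set.subset_univ S)).trans (htot.trans ?_)
    apply ENNReal.ofReal_le_ofReal
    have : g π ≤ g ε := hganti ⟨hε0, hεπ⟩ ⟨hπ, le_refl π⟩ hεπ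
    nlinarith
  -- main lintegral bound
  have main : (∫⁻ t in S, ENNReal.ofReal (P r ‖t - θ‖) ∂μ) ≤ ENNReal.ofReal (π * g ε) := by
    calc (∫⁻ t in S, ENNReal.ofReal (P r ‖t - θ‖) ∂μ)
        = ∫⁻ t in S, (ENNReal.ofReal (P r π) + ∫⁻ s in Set.Ioc ε π, φ t s) ∂μ :=
          setLIntegral_congr_fun hS key
      _ = ENNReal.ofReal (P r π) * μ S + ∫⁻ t in S, (∫⁻ s in Set.Ioc ε π, φ t s) ∂μ := by
          rw [lintegral_add_left measurable_const, setLIntegral_const]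
      _ ≤ ENNReal.ofReal (P r π) * ENNReal.ofReal (π * g ε) + ENNReal.ofReal (g ε * A) := by
          gcongr
          rw [hswap]; exact houter
      _ = ENNReal.ofReal (P r π * (π * g ε) + g ε * A) := by
          rw [← ENNReal.ofReal_mul (P_nonneg hr0 hr1 π),
            ← ENNReal.ofReal_add (mul_nonneg (P_nonneg hr0 hr1 π)
              (mul_nonneg hπ.le hgε.le)) (mul_nonneg hgε.le hA0)]
      _ ≤ ENNReal.ofReal (π * g ε) := by
          apply ENNReal.ofReal_le_ofReal
          rw [hAdef, Q_pi hr0 hr1]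
          nlinarith [mul_le_mul_of_nonneg_left (eps_P_le_Q hr0 hr1 hε0 hεπ) hgε.le]
  rw [MeasureTheory.integral_eq_lintegral_of_nonneg_ae
    (Filter.Eventually.of_forall fun t => P_nonneg hr0 hr1 _)
    (((P_cont hr0 hr1).comp hx_cont).aestronglyMeasurable)]
  exact ENNReal.toReal_le_of_le_ofReal (mul_nonneg hπ.le hgε.le) main
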